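/- Let G be a group, C a field (or commutative ring which is an integral domain), f: G → ℝ a group homomorphism, and g ∈ G. Then any element E of the group algebra C[G] of the form E = τ_g + Σ_{h : f(h) < f(g)} c_h τ_h (a finite sum with coefficients c_h ∈ C) is not a left zero divisor: for every nonzero F ∈ C[G], EF ≠ 0. -/

import Mathlib

/-- Let `G` be a group, `C` an integral domain, `f : G → ℝ` a group
homomorphism and `g ∈ G`. Any element of the group algebra `C[G]` of the form
`τ_g + Σ_{h : f(h) < f(g)} c_h τ_h` is not a left zero divisor. -/
theorem group_algebra_not_zero_divisor {G : Type} [Group G] {C : Type} [CommRing C]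
    [IsDomain C] (f : G → ℝ) (hf : ∀ a b : G, f (a * b) = f a + f b) (g : G)
    (E' : MonoidAlgebra C G) (hE' : ∀ h ∈ E'.coeff.support, f h < f g)
    (F : MonoidAlgebra C G) (hF : F ≠ 0) :
    (MonoidAlgebra.single g (1 : C) + E') * F ≠ 0 := by
  classical
  obtain ⟨k₀, hk₀, hmax⟩ := F.coeff.support.exists_max_image f
    (Finsupp.support_nonempty_iff.mpr (MonoidAlgebra.coeff_eq_zero.not.mpr hF))
  intro hEF
  have hE'F : (E' * F).coeff (g * k₀) = 0 := by
    rw [MonoidAlgebra.coeff_mul]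
    apply Finset.sum_eq_zero
    intro a₁ ha₁
    apply Finset.sum_eq_zero
    intro a₂ ha₂
    simp only []
    rw [if_neg]
    intro heq
    have h1 : f a₁ + f a₂ = f g + f k₀ := by rw [← hf, ← hf, heq]
    have h2 : f a₁ < f g := hE' a₁ ha₁
    have h3 : f a₂ ≤ f k₀ := hmax a₂ ha₂
    linarith
  have key : ((MonoidAlgebra.single g (1 : C) + E') * F).coeff (g * k₀) = F.coeff k₀ := by
    rw [add_mul, MonoidAlgebra.coeff_add, Finsupp.add_apply, MonoidAlgebra.coeff_single_mul_apply, one_mul,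
      inv_mul_cancel_left, hE'F, add_zero]
  rw [hEF] at key
  exact Finsupp.mem_support_iff.mp hk₀ key.symm
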